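/- Let β ∈ (0,1) and suppose ‖z_t‖ ≤ D for all t = 1, …, T. Let y_t be distributed over {x_1, …, x_t} with P(y_t = x_s) = β^{t−s}(1−β)/(1−β^t), where x_t = x_{t−1} + α_t z_t with α_t i.i.d. Exp(1), and let x̄_t = E[y_t]. Then (1/T) Σ_{t=1}^T E‖y_t − x̄_t‖² ≤ 12 D²/(1−β)². -/

import Mathlib

open MeasureTheory ProbabilityTheory
open scoped BigOperators

section Helpers

lemma exp_moment (n : ℕ) :
    Integrable (fun x => |x| ^ n) (expMeasure 1) ∧
      ∫ x, |x| ^ n ∂(expMeasure 1) = Nat.factorial n := by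
  have hpdf_nonneg : ∀ x, 0 ≤ exponentialPDFReal 1 x :=
    exponentialPDFReal_nonneg zero_lt_one
  have hmeas : Measurable fun x : ℝ => (exponentialPDFReal 1 x).toNNReal :=
    (measurable_exponentialPDFReal 1).real_toNNReal
  have hexp : expMeasure 1 =
      MeasureTheory.volume.withDensity
        (fun x => ((exponentialPDFReal 1 x).toNNReal : ENNReal)) := rfl
  have hrw : (fun x : ℝ => (exponentialPDFReal 1 x).toNNReal • (|x| ^ n))
      = Set.indicator (Set.Ici (0:ℝ)) (fun x => Real.exp (-x) * x ^ n) := by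
    funext x
    rw [Set.indicator_apply, NNReal.smul_def, smul_eq_mul,
      Real.coe_toNNReal _ (hpdf_nonneg x)]
    by_cases hx : 0 ≤ x
    · rw [if_pos (Set.mem_Ici.mpr hx)]
      simp [exponentialPDFReal, gammaPDFReal, hx, abs_of_nonneg hx]
    · rw [if_neg (by simpa using hx)]
      have : exponentialPDFReal 1 x = 0 := by
        simp [exponentialPDFReal, gammaPDFReal, hx]
      simp [this]
  have hIntOn : IntegrableOn (fun x => Real.exp (-x) * x ^ n) (Set.Ioi (0:ℝ)) := by
    have := Real.GammaIntegral_convergent (s := (n:ℝ) + 1) (by positivity)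
    refine this.congr_fun ?_ measurableSet_Ioi
    intro x hx
    norm_num [Real.rpow_natCast]
  have hIntOn' : IntegrableOn (fun x => Real.exp (-x) * x ^ n) (Set.Ici (0:ℝ)) := by
    rwa [integrableOn_Ici_iff_integrableOn_Ioi]
  constructor
  · rw [hexp, integrable_withDensity_iff_integrable_coe_smul hmeas]
    have hrw' : (fun x : ℝ => ((exponentialPDFReal 1 x).toNNReal : ℝ) • (|x| ^ n))
        = Set.indicator (Set.Ici (0:ℝ)) (fun x => Real.exp (-x) * x ^ n) := hrw
    rw [hrw']
    exact hIntOn'.integrable_indicator measurableSet_Ici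
  · rw [hexp, integral_withDensity_eq_integral_smul hmeas]
    rw [hrw, MeasureTheory.integral_indicator measurableSet_Ici,
      MeasureTheory.integral_Ici_eq_integral_Ioi]
    have hg := Real.Gamma_eq_integral (s := (n:ℝ) + 1) (by positivity)
    have h2 : ∫ x in Set.Ioi (0:ℝ), Real.exp (-x) * x ^ n
        = ∫ x in Set.Ioi (0:ℝ), Real.exp (-x) * x ^ ((n:ℝ) + 1 - 1) := by
      refine setIntegral_congr_fun measurableSet_Ioi fun x hx => ?_
      norm_num [Real.rpow_natCast]
    rw [h2, ← hg]
    exact_mod_cast Real.Gamma_nat_eq_factorial n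

variable {Ω : Type*} [MeasurableSpace Ω] {μ : Measure Ω} [IsProbabilityMeasure μ]

lemma alpha_moment {α : ℕ → Ω → ℝ} (hαmeas : ∀ t, Measurable (α t))
    (hαdist : ∀ t, Measure.map (α t) μ = expMeasure 1) (i : ℕ) (n : ℕ) :
    Integrable (fun ω => |α i ω| ^ n) μ ∧
      ∫ ω, |α i ω| ^ n ∂μ = Nat.factorial n := by
  have hg : Measurable fun x : ℝ => |x| ^ n := (measurable_abs.pow_const n)
  have h1 := (exp_moment n).1
  have h2 := (exp_moment n).2
  rw [← hαdist i] at h1 h2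
  constructor
  · exact (integrable_map_measure hg.aestronglyMeasurable
      (hαmeas i).aemeasurable).mp h1
  · rw [← h2, integral_map (hαmeas i).aemeasurable hg.aestronglyMeasurable]

/-- Integral of the square of a sum of |α i| over `Icc (s+1) t`. -/
lemma sum_abs_sq_integral {α : ℕ → Ω → ℝ} (hαmeas : ∀ t, Measurable (α t))
    (hαdist : ∀ t, Measure.map (α t) μ = expMeasure 1)
    (hαindep : iIndepFun α μ) (s t : ℕ) :
    Integrable (fun ω => (∑ i ∈ Finset.Icc (s+1) t, |α i ω|) ^ 2) μ ∧
      ∫ ω, (∑ i ∈ Finset.Icc (s+1) t, |α i ω|) ^ 2 ∂μ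
        = ((t - s : ℕ) : ℝ) ^ 2 + ((t - s : ℕ) : ℝ) := by
  set I := Finset.Icc (s+1) t with hI
  have hcard : I.card = t - s := by rw [hI, Nat.card_Icc]; omega
  have habs1 : ∀ i, Integrable (fun ω => |α i ω|) μ := by
    intro i; simpa using (alpha_moment hαmeas hαdist i 1).1
  have habs1' : ∀ i, ∫ ω, |α i ω| ∂μ = 1 := by
    intro i; simpa [Nat.factorial] using (alpha_moment hαmeas hαdist i 1).2
  have hpair : ∀ i j, Integrable (fun ω => |α i ω| * |α j ω|) μ ∧
      ∫ ω, |α i ω| * |α j ω| ∂μ = if i = j then (2:ℝ) else 1 := by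
    intro i j
    by_cases hij : i = j
    · subst hij
      constructor
      · simpa [pow_two] using (alpha_moment hαmeas hαdist i 2).1
      · rw [if_pos rfl]
        have := (alpha_moment hαmeas hαdist i 2).2
        simp only [pow_two] at this
        simpa [Nat.factorial] using this
    · have hind : IndepFun (α i) (α j) μ := hαindep.indepFun hij
      have hind' : IndepFun (fun ω => |α i ω|) (fun ω => |α j ω|) μ :=
        hind.comp measurable_abs measurable_abs
      constructor
      · exact hind'.integrable_mul (habs1 i) (habs1 j)
      · rw [if_neg hij]
        have h := hind'.integral_mul_eq_mul_integral (habs1 i).aestronglyMeasurable (habs1 j).aestronglyMeasurable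
        calc ∫ ω, |α i ω| * |α j ω| ∂μ
            = integral μ ((fun ω => |α i ω|) * fun ω => |α j ω|) := rfl
          _ = 1 := by rw [h, habs1' i, habs1' j, mul_one]
  have hexpand : ∀ ω, (∑ i ∈ I, |α i ω|) ^ 2
      = ∑ i ∈ I, ∑ j ∈ I, |α i ω| * |α j ω| := by
    intro ω
    rw [pow_two, Finset.sum_mul_sum]
  constructor
  · simp_rw [hexpand]
    exact integrable_finset_sum _ fun i _ =>
      integrable_finset_sum _ fun j _ => (hpair i j).1
  · simp_rw [hexpand]
    rw [integral_finset_sum _ fun i _ =>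
      integrable_finset_sum _ fun j _ => (hpair i j).1]
    have : ∀ i ∈ I, ∫ ω, ∑ j ∈ I, |α i ω| * |α j ω| ∂μ
        = ∑ j ∈ I, if i = j then (2:ℝ) else 1 := by
      intro i _
      rw [integral_finset_sum _ fun j _ => (hpair i j).1]
      exact Finset.sum_congr rfl fun j _ => (hpair i j).2
    rw [Finset.sum_congr rfl this]
    have hsum : ∑ i ∈ I, ∑ j ∈ I, (if i = j then (2:ℝ) else 1)
        = (I.card : ℝ) ^ 2 + I.card := by
      have : ∀ i ∈ I, ∑ j ∈ I, (if i = j then (2:ℝ) else 1)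
          = (I.card : ℝ) + 1 := by
        intro i hi
        have : ∀ j, (if i = j then (2:ℝ) else 1) = 1 + (if j = i then (1:ℝ) else 0) := by
          intro j; by_cases h : i = j <;> simp [h, eq_comm] <;> norm_num
        simp_rw [this]
        rw [Finset.sum_add_distrib, Finset.sum_const, Finset.sum_ite_eq' I i (fun _ => (1:ℝ))]
        simp [hi]
      rw [Finset.sum_congr rfl this, Finset.sum_const]
      push_cast; ring
    rw [hsum, hcard]


-- bias-variance: weighted variance minimized at the weighted mean
lemma var_le_moment {E : Type*} [NormedAddCommGroup E] [InnerProductSpace ℝ E]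
    {ι : Type*} (I : Finset ι) (w : ι → ℝ) (hw : ∀ i ∈ I, 0 ≤ w i)
    (hw1 : ∑ i ∈ I, w i = 1) (a : ι → E) (c : E) :
    ∑ i ∈ I, w i * ‖a i - ∑ j ∈ I, w j • a j‖ ^ 2
      ≤ ∑ i ∈ I, w i * ‖a i - c‖ ^ 2 := by
  set m : E := ∑ j ∈ I, w j • a j with hm
  have hzero : ∑ i ∈ I, w i • (a i - m) = 0 := by
    simp_rw [smul_sub]
    rw [Finset.sum_sub_distrib, ← Finset.sum_smul, hw1, one_smul, ← hm, sub_self]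
  have hexp : ∀ i, ‖a i - c‖ ^ 2
      = ‖a i - m‖ ^ 2 + 2 * inner ℝ (a i - m) (m - c) + ‖m - c‖ ^ 2 := by
    intro i
    have : a i - c = (a i - m) + (m - c) := by abel
    rw [this, @norm_add_sq_real]
  calc ∑ i ∈ I, w i * ‖a i - m‖ ^ 2
      ≤ ∑ i ∈ I, w i * ‖a i - m‖ ^ 2 + ‖m - c‖ ^ 2 := le_add_of_nonneg_right (by positivity)
    _ = ∑ i ∈ I, w i * ‖a i - c‖ ^ 2 := by
        simp_rw [hexp, mul_add]
        rw [Finset.sum_add_distrib, Finset.sum_add_distrib]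
        have h1 : ∑ i ∈ I, w i * (2 * inner ℝ (a i - m) (m - c)) = 0 := by
          have : ∑ i ∈ I, w i * (2 * (inner ℝ (a i - m) (m - c) : ℝ))
              = 2 * inner ℝ (∑ i ∈ I, w i • (a i - m)) (m - c) := by
            rw [sum_inner, Finset.mul_sum]
            refine Finset.sum_congr rfl fun i _ => ?_
            rw [real_inner_smul_left]; ring
          rw [this, hzero, inner_zero_left, mul_zero]
        have h2 : ∑ i ∈ I, w i * ‖m - c‖ ^ 2 = ‖m - c‖ ^ 2 := by
          rw [← Finset.sum_mul, hw1, one_mul]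
        rw [h1, h2]; ring

-- telescoping
lemma telescope {d : ℕ} {Ω : Type*} (α : ℕ → Ω → ℝ)
    (z x : ℕ → Ω → EuclideanSpace ℝ (Fin d))
    (hx : ∀ t, 1 ≤ t → ∀ ω, x t ω = x (t - 1) ω + α t ω • z t ω)
    (ω : Ω) (s : ℕ) : ∀ t, s ≤ t →
    x t ω - x s ω = ∑ i ∈ Finset.Icc (s+1) t, α i ω • z i ω := by
  intro t
  induction t with
  | zero => intro h; interval_cases s; simp
  | succ n ih =>
    intro h
    rcases Nat.lt_or_ge s (n+1) with h' | h'
    · have hs : s ≤ n := by omega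
      rw [Finset.sum_Icc_succ_top (by omega : s + 1 ≤ n + 1), ← ih hs]
      have := hx (n+1) (by omega) ω
      simp only [Nat.add_sub_cancel] at this
      rw [this]; abel
    · have : s = n + 1 := by omega
      subst this
      simp
-- reindex
lemma sum_Icc_reflect (t : ℕ) (f : ℕ → ℝ) :
    ∑ s ∈ Finset.Icc 1 t, f (t - s) = ∑ k ∈ Finset.range t, f k := by
  refine Finset.sum_nbij' (i := fun s => t - s) (j := fun k => t - k) ?_ ?_ ?_ ?_ ?_
  all_goals intro a ha
  · simp only [Finset.mem_Icc] at ha; simp only [Finset.mem_range]; omega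
  · simp only [Finset.mem_range] at ha; simp only [Finset.mem_Icc]; omega
  · simp only [Finset.mem_Icc] at ha; show t - (t - a) = a; omega
  · simp only [Finset.mem_range] at ha; show t - (t - a) = a; omega
  · rfl


lemma key_sum {β : ℝ} (hβ0 : 0 < β) (hβ1 : β < 1) (t : ℕ) :
    ∑ k ∈ Finset.range t, β ^ k * (((k:ℝ))^2 + (k:ℝ))
      ≤ 4 / (1-β)^2 * ∑ k ∈ Finset.range t, β ^ k := by
  have h1 : (0:ℝ) < 1 - β := by linarith
  obtain ⟨ψ, hψ⟩ : ∃ ψ : ℝ → ℝ, ψ = fun y =>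
      (4 - (1-β)^2*(y^2+y) - β*(1+β))/(1-β) - (2*y+1)*β := ⟨_, rfl⟩
  have hid : ∀ m : ℕ, ∑ k ∈ Finset.range m, β ^ k * (4 - (((k:ℝ))^2 + k)*(1-β)^2)
      = ψ 0 - β ^ m * ψ m := by
    intro m
    induction m with
    | zero => simp
    | succ n ih =>
      rw [Finset.sum_range_succ, ih]
      have hrec : ψ n - β * ψ ((n:ℝ)+1) = 4 - (((n:ℝ))^2+(n:ℝ))*(1-β)^2 := by
        rw [hψ]
        field_simp
        ring
      push_cast
      linear_combination (-(β^n)) * hrec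
  have hψ0 : ψ 0 = (4-2*β)/(1-β) := by rw [hψ]; field_simp; ring
  have hψ0' : 0 ≤ ψ 0 := by rw [hψ0]; apply div_nonneg <;> linarith
  have hdiff : ψ 0 - ψ t = (1-β)*((t:ℝ)^2+(t:ℝ)) + 2*(t:ℝ)*β := by
    rw [hψ]; field_simp; ring
  have ht : (0:ℝ) ≤ (t:ℝ) := Nat.cast_nonneg t
  have hψt : ψ t ≤ ψ 0 := by nlinarith [sq_nonneg ((t:ℝ))]
  have hpos : 0 ≤ ψ 0 - β ^ t * ψ t := by
    rcases le_or_gt (ψ t) 0 with h | h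
    · have : β ^ t * ψ t ≤ 0 := mul_nonpos_of_nonneg_of_nonpos (by positivity) h
      linarith
    · have hb : β ^ t ≤ 1 := pow_le_one₀ (le_of_lt hβ0) (le_of_lt hβ1)
      nlinarith
  have hexp : ∑ k ∈ Finset.range t, β ^ k * (4 - (((k:ℝ))^2 + k)*(1-β)^2)
      = 4 * (∑ k ∈ Finset.range t, β ^ k)
        - (1-β)^2 * ∑ k ∈ Finset.range t, β ^ k * (((k:ℝ))^2 + (k:ℝ)) := by
    rw [Finset.mul_sum, Finset.mul_sum, ← Finset.sum_sub_distrib]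
    exact Finset.sum_congr rfl fun k _ => by ring
  have h0 : 0 ≤ 4 * (∑ k ∈ Finset.range t, β ^ k)
      - (1-β)^2 * ∑ k ∈ Finset.range t, β ^ k * (((k:ℝ))^2 + (k:ℝ)) := by
    rw [← hexp, hid t]; exact hpos
  rw [div_mul_eq_mul_div, le_div_iff₀ (by positivity : (0:ℝ) < (1-β)^2)]
  linarith

end Helpers

/-- The EMA iterate `x̄ t = ((1−β)/(1−β^t)) Σ_{s=1}^t β^{t−s} • x s`. -/
noncomputable def emaIterate {d : ℕ} (β : ℝ) (x : ℕ → EuclideanSpace ℝ (Fin d)) (t : ℕ) :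
    EuclideanSpace ℝ (Fin d) :=
  ((1 - β) / (1 - β ^ t)) • ∑ s ∈ Finset.Icc 1 t, β ^ (t - s) • x s

/-- For iterates `x t = x (t−1) + α t • z t` with `α t` i.i.d. `Exp(1)`
(independent of the history) and `‖z t‖ ≤ D`, letting `y t` be the geometric-weighted random
iterate (`P(y t = x s) = β^{t−s}(1−β)/(1−β^t)`) and `x̄ t = E[y t]` the EMA, the averaged
variance satisfies `(1/T) Σ_{t=1}^T E‖y t − x̄ t‖² ≤ 12 D²/(1−β)²`. -/
theorem ema_variance_bound {d : ℕ} {Ω : Type*} [MeasurableSpace Ω]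
    (μ : Measure Ω) [IsProbabilityMeasure μ]
    (β D : ℝ) (hβ : β ∈ Set.Ioo (0 : ℝ) 1) (hD : 0 < D)
    (T : ℕ) (hT : 1 ≤ T)
    (α : ℕ → Ω → ℝ) (z x : ℕ → Ω → EuclideanSpace ℝ (Fin d))
    (hαmeas : ∀ t, Measurable (α t))
    (hαdist : ∀ t, Measure.map (α t) μ = expMeasure 1)
    (hαindep : iIndepFun α μ)
    (hαhist : ∀ t, 1 ≤ t →
      IndepFun (α t) (fun ω => (x (t - 1) ω, z t ω)) μ)
    (hz : ∀ t ω, ‖z t ω‖ ≤ D)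
    (hx : ∀ t, 1 ≤ t → ∀ ω, x t ω = x (t - 1) ω + α t ω • z t ω)
    (hInt : ∀ t ∈ Finset.Icc 1 T, Integrable (fun ω =>
      ∑ s ∈ Finset.Icc 1 t, (β ^ (t - s) * (1 - β) / (1 - β ^ t)) *
        ‖x s ω - emaIterate β (fun n => x n ω) t‖ ^ 2) μ) :
    (1 / (T : ℝ)) * ∑ t ∈ Finset.Icc 1 T, ∫ ω,
        ∑ s ∈ Finset.Icc 1 t, (β ^ (t - s) * (1 - β) / (1 - β ^ t)) *
          ‖x s ω - emaIterate β (fun n => x n ω) t‖ ^ 2 ∂μ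
      ≤ 12 * D ^ 2 / (1 - β) ^ 2 := by
  obtain ⟨hβ0, hβ1⟩ := hβ
  have h1 : (0:ℝ) < 1 - β := by linarith
  have hmain : ∀ t ∈ Finset.Icc 1 T, (∫ ω,
      ∑ s ∈ Finset.Icc 1 t, (β ^ (t - s) * (1 - β) / (1 - β ^ t)) *
        ‖x s ω - emaIterate β (fun n => x n ω) t‖ ^ 2 ∂μ) ≤ 4 * D ^ 2 / (1 - β) ^ 2 := by
    intro t htmem
    simp only [Finset.mem_Icc] at htmem
    have ht1 : 1 ≤ t := htmem.1
    have hβt : (0:ℝ) < 1 - β ^ t := by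
      have : β ^ t < 1 := pow_lt_one₀ (le_of_lt hβ0) hβ1 (by omega)
      linarith
    set w : ℕ → ℝ := fun s => β ^ (t - s) * (1 - β) / (1 - β ^ t) with hw
    have hwnn : ∀ s, 0 ≤ w s := fun s => by
      simp only [hw]; positivity
    have hwsum : ∑ s ∈ Finset.Icc 1 t, w s = 1 := by
      simp only [hw]
      rw [← Finset.sum_div, ← Finset.sum_mul]
      rw [sum_Icc_reflect t (fun k => β ^ k), geom_sum_eq (ne_of_lt hβ1) t]
      rw [div_mul_eq_mul_div, div_div, div_eq_one_iff_eq
        (mul_ne_zero (by linarith) (by linarith))]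
      ring
    set A : ℕ → Ω → ℝ := fun s ω => ∑ i ∈ Finset.Icc (s+1) t, |α i ω| with hA
    -- pointwise bound
    have hptwise : ∀ ω, ∑ s ∈ Finset.Icc 1 t, w s *
        ‖x s ω - emaIterate β (fun n => x n ω) t‖ ^ 2
        ≤ ∑ s ∈ Finset.Icc 1 t, w s * (D ^ 2 * (A s ω) ^ 2) := by
      intro ω
      have hema : emaIterate β (fun n => x n ω) t
          = ∑ j ∈ Finset.Icc 1 t, w j • x j ω := by
        rw [emaIterate, Finset.smul_sum]
        refine Finset.sum_congr rfl fun j _ => ?_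
        rw [smul_smul]
        congr 1
        simp only [hw]; ring
      rw [hema]
      refine le_trans (var_le_moment (Finset.Icc 1 t) w (fun s _ => hwnn s) hwsum
        (fun s => x s ω) (x t ω)) ?_
      refine Finset.sum_le_sum fun s hs => ?_
      simp only [Finset.mem_Icc] at hs
      refine mul_le_mul_of_nonneg_left ?_ (hwnn s)
      have hnorm : ‖x s ω - x t ω‖ ≤ D * A s ω := by
        calc ‖x s ω - x t ω‖ = ‖x t ω - x s ω‖ := norm_sub_rev _ _
          _ = ‖∑ i ∈ Finset.Icc (s+1) t, α i ω • z i ω‖ := by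
              rw [telescope α z x hx ω s t hs.2]
          _ ≤ ∑ i ∈ Finset.Icc (s+1) t, ‖α i ω • z i ω‖ := norm_sum_le _ _
          _ ≤ ∑ i ∈ Finset.Icc (s+1) t, |α i ω| * D := by
              refine Finset.sum_le_sum fun i _ => ?_
              rw [norm_smul, Real.norm_eq_abs]
              exact mul_le_mul_of_nonneg_left (hz i ω) (abs_nonneg _)
          _ = D * A s ω := by
              simp only [hA]
              rw [← Finset.sum_mul]; ring
      calc ‖x s ω - x t ω‖ ^ 2 ≤ (D * A s ω) ^ 2 :=
            pow_le_pow_left₀ (norm_nonneg _) hnorm 2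
        _ = D ^ 2 * (A s ω) ^ 2 := by ring
    -- integrability of dominating function
    have hAint : ∀ s, Integrable (fun ω => w s * (D ^ 2 * (A s ω) ^ 2)) μ := by
      intro s
      exact (((sum_abs_sq_integral hαmeas hαdist hαindep s t).1).const_mul _).const_mul _
    have hHint : Integrable (fun ω => ∑ s ∈ Finset.Icc 1 t,
        w s * (D ^ 2 * (A s ω) ^ 2)) μ :=
      integrable_finset_sum _ fun s _ => hAint s
    -- integral comparison
    have hle1 : (∫ ω, ∑ s ∈ Finset.Icc 1 t, (β ^ (t - s) * (1 - β) / (1 - β ^ t)) *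
        ‖x s ω - emaIterate β (fun n => x n ω) t‖ ^ 2 ∂μ)
        ≤ ∫ ω, ∑ s ∈ Finset.Icc 1 t, w s * (D ^ 2 * (A s ω) ^ 2) ∂μ := by
      refine integral_mono_of_nonneg (Filter.Eventually.of_forall fun ω => ?_) hHint
        (Filter.Eventually.of_forall fun ω => hptwise ω)
      exact Finset.sum_nonneg fun s _ => mul_nonneg (hwnn s) (by positivity)
    -- compute the dominating integral
    have heval : ∫ ω, ∑ s ∈ Finset.Icc 1 t, w s * (D ^ 2 * (A s ω) ^ 2) ∂μ
        = ∑ s ∈ Finset.Icc 1 t, w s * (D ^ 2 *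
            (((t - s : ℕ) : ℝ) ^ 2 + ((t - s : ℕ) : ℝ))) := by
      rw [integral_finset_sum _ fun s _ => hAint s]
      refine Finset.sum_congr rfl fun s _ => ?_
      rw [integral_const_mul, integral_const_mul,
        (sum_abs_sq_integral hαmeas hαdist hαindep s t).2]
    -- bound the sum
    have hbound : ∑ s ∈ Finset.Icc 1 t, w s * (D ^ 2 *
          (((t - s : ℕ) : ℝ) ^ 2 + ((t - s : ℕ) : ℝ)))
        ≤ 4 * D ^ 2 / (1 - β) ^ 2 := by
      have hrw2 : ∑ s ∈ Finset.Icc 1 t, w s * (D ^ 2 *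
            (((t - s : ℕ) : ℝ) ^ 2 + ((t - s : ℕ) : ℝ)))
          = D ^ 2 * ((1 - β) / (1 - β ^ t) *
              ∑ s ∈ Finset.Icc 1 t,
                (fun k => β ^ k * (((k : ℕ) : ℝ) ^ 2 + ((k : ℕ) : ℝ))) (t - s)) := by
        rw [Finset.mul_sum, Finset.mul_sum]
        refine Finset.sum_congr rfl fun s _ => ?_
        simp only [hw]
        ring
      have hrefl := sum_Icc_reflect t (fun k => β ^ k * (((k : ℕ) : ℝ) ^ 2 + ((k : ℕ) : ℝ)))
      rw [hrw2, hrefl]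
      have hks := key_sum hβ0 hβ1 t
      have hnn : 0 ≤ (1 - β) / (1 - β ^ t) := by positivity
      have : (1 - β) / (1 - β ^ t) *
            ∑ k ∈ Finset.range t, β ^ k * (((k : ℕ) : ℝ) ^ 2 + ((k : ℕ) : ℝ))
          ≤ (1 - β) / (1 - β ^ t) *
            (4 / (1 - β) ^ 2 * ∑ k ∈ Finset.range t, β ^ k) :=
        mul_le_mul_of_nonneg_left hks hnn
      have hgs : ∑ k ∈ Finset.range t, β ^ k = (1 - β ^ t) / (1 - β) := by
        rw [geom_sum_eq (ne_of_lt hβ1) t, div_eq_div_iff (by linarith) (by linarith)]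
        ring
      have heq : (1 - β) / (1 - β ^ t) *
            (4 / (1 - β) ^ 2 * ∑ k ∈ Finset.range t, β ^ k) = 4 / (1 - β) ^ 2 := by
        rw [hgs]
        field_simp
      rw [heq] at this
      calc D ^ 2 * ((1 - β) / (1 - β ^ t) *
            ∑ k ∈ Finset.range t, β ^ k * (((k : ℕ) : ℝ) ^ 2 + ((k : ℕ) : ℝ)))
          ≤ D ^ 2 * (4 / (1 - β) ^ 2) := by
            exact mul_le_mul_of_nonneg_left this (by positivity)
        _ = 4 * D ^ 2 / (1 - β) ^ 2 := by ring
    calc (∫ ω, ∑ s ∈ Finset.Icc 1 t, (β ^ (t - s) * (1 - β) / (1 - β ^ t)) *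
          ‖x s ω - emaIterate β (fun n => x n ω) t‖ ^ 2 ∂μ)
        ≤ ∫ ω, ∑ s ∈ Finset.Icc 1 t, w s * (D ^ 2 * (A s ω) ^ 2) ∂μ := hle1
      _ = ∑ s ∈ Finset.Icc 1 t, w s * (D ^ 2 *
            (((t - s : ℕ) : ℝ) ^ 2 + ((t - s : ℕ) : ℝ))) := heval
      _ ≤ 4 * D ^ 2 / (1 - β) ^ 2 := hbound
  -- sum over t and average
  have hsum : ∑ t ∈ Finset.Icc 1 T, (∫ ω,
      ∑ s ∈ Finset.Icc 1 t, (β ^ (t - s) * (1 - β) / (1 - β ^ t)) *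
        ‖x s ω - emaIterate β (fun n => x n ω) t‖ ^ 2 ∂μ)
      ≤ (T : ℝ) * (4 * D ^ 2 / (1 - β) ^ 2) := by
    calc ∑ t ∈ Finset.Icc 1 T, (∫ ω,
        ∑ s ∈ Finset.Icc 1 t, (β ^ (t - s) * (1 - β) / (1 - β ^ t)) *
          ‖x s ω - emaIterate β (fun n => x n ω) t‖ ^ 2 ∂μ)
        ≤ ∑ t ∈ Finset.Icc 1 T, (4 * D ^ 2 / (1 - β) ^ 2) := Finset.sum_le_sum hmain
      _ = (T : ℝ) * (4 * D ^ 2 / (1 - β) ^ 2) := by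
          rw [Finset.sum_const, Nat.card_Icc]
          simp
  have hT0 : (0:ℝ) < (T : ℝ) := by exact_mod_cast Nat.lt_of_lt_of_le Nat.zero_lt_one hT
  calc (1 / (T : ℝ)) * ∑ t ∈ Finset.Icc 1 T, (∫ ω,
        ∑ s ∈ Finset.Icc 1 t, (β ^ (t - s) * (1 - β) / (1 - β ^ t)) *
          ‖x s ω - emaIterate β (fun n => x n ω) t‖ ^ 2 ∂μ)
      ≤ (1 / (T : ℝ)) * ((T : ℝ) * (4 * D ^ 2 / (1 - β) ^ 2)) :=
        mul_le_mul_of_nonneg_left hsum (by positivity)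
    _ = 4 * D ^ 2 / (1 - β) ^ 2 := by field_simp
    _ ≤ 12 * D ^ 2 / (1 - β) ^ 2 := by
        apply div_le_div_of_nonneg_right ?_ (by positivity)
        nlinarith [sq_nonneg D]
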